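/- Let Ω be a set equipped with the σ-algebra of all subsets of Ω, let p_1, …, p_n (n ≥ 1) be countably additive, nonatomic probability measures on Ω, let X be a set, let f : Ω → X be a function with finite range, let x ∈ X, and let α ∈ (0,1). Then there exists a function g : Ω → X with finite range such that for every i ∈ {1,…,n}: p_i(g⁻¹(x)) = α · p_i(f⁻¹(x)) + (1 − α), and p_i(g⁻¹(y)) = α · p_i(f⁻¹(y)) for every y ∈ X with y ≠ x. -/

import Mathlib

open MeasureTheory Set Filter Topology
open scoped ENNReal NNReal

noncomputable section

namespace Lyap

instance instLCS (E : Type*) [NormedAddCommGroup E] [NormedSpace ℝ E] :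
    LocallyConvexSpace ℝ (WeakDual ℝ E) :=
  (topDualPairing ℝ E).weakBilin_withSeminorms.toLocallyConvexSpace

variable {Ω : Type*} [MeasurableSpace Ω]

theorem meas (hms : ∀ s : Set Ω, MeasurableSet s) (g : Ω → ℝ) : Measurable g :=
  fun _ _ => hms _

theorem integrable_of_abs_le (hms : ∀ s : Set Ω, MeasurableSet s) (μ : Measure Ω)
    [IsFiniteMeasure μ] (g : Ω → ℝ) (C : ℝ) (hg : ∀ᵐ ω ∂μ, |g ω| ≤ C) :
    Integrable g μ :=
  ⟨(meas hms g).aestronglyMeasurable,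
    HasFiniteIntegral.of_bounded (C := C) (by simpa [Real.norm_eq_abs] using hg)⟩

theorem integrable_mul (hms : ∀ s : Set Ω, MeasurableSet s) (μ : Measure Ω)
    [IsFiniteMeasure μ] (g : Ω → ℝ) (C : ℝ) (hg : ∀ᵐ ω ∂μ, |g ω| ≤ C) (f : Lp ℝ 1 μ) :
    Integrable (fun ω => (f : Ω → ℝ) ω * g ω) μ := by
  have h := (L1.integrable_coeFn f).bdd_mul (c := C)
    ((meas hms g).aestronglyMeasurable) (by simpa [Real.norm_eq_abs] using hg)
  exact h.congr (Eventually.of_forall fun ω => mul_comm _ _)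

/-- The pairing with a bounded function as a continuous linear functional on `L¹`. -/
def pairCLM (hms : ∀ s : Set Ω, MeasurableSet s) (μ : Measure Ω) [IsFiniteMeasure μ]
    (g : Ω → ℝ) (hg : ∀ᵐ ω ∂μ, |g ω| ≤ 1) : Lp ℝ 1 μ →L[ℝ] ℝ :=
  LinearMap.mkContinuous
    { toFun := fun f => ∫ ω, (f : Ω → ℝ) ω * g ω ∂μ
      map_add' := fun f₁ f₂ => by
        have h1 : (fun ω => ((f₁ + f₂ : Lp ℝ 1 μ) : Ω → ℝ) ω * g ω)
            =ᵐ[μ] fun ω => (f₁ : Ω → ℝ) ω * g ω + (f₂ : Ω → ℝ) ω * g ω := by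
          filter_upwards [Lp.coeFn_add f₁ f₂] with ω h
          rw [h]; simp [add_mul]
        show (∫ ω, ((f₁ + f₂ : Lp ℝ 1 μ) : Ω → ℝ) ω * g ω ∂μ) = _
        rw [integral_congr_ae h1,
          integral_add (integrable_mul hms μ g 1 hg f₁) (integrable_mul hms μ g 1 hg f₂)]
      map_smul' := fun c f => by
        have h1 : (fun ω => ((c • f : Lp ℝ 1 μ) : Ω → ℝ) ω * g ω)
            =ᵐ[μ] fun ω => c * ((f : Ω → ℝ) ω * g ω) := by
          filter_upwards [Lp.coeFn_smul c f] with ω h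
          simp [h, mul_assoc]
        show (∫ ω, ((c • f : Lp ℝ 1 μ) : Ω → ℝ) ω * g ω ∂μ) = _
        rw [integral_congr_ae h1, integral_const_mul]
        rfl }
    1
    (fun f => by
      simp only [LinearMap.coe_mk, AddHom.coe_mk, one_mul]
      refine le_trans (norm_integral_le_integral_norm _) ?_
      have h2 : ∫ ω, ‖(f : Ω → ℝ) ω * g ω‖ ∂μ ≤ ∫ ω, ‖(f : Ω → ℝ) ω‖ ∂μ := by
        refine integral_mono_ae ((integrable_mul hms μ g 1 hg f).norm)
          (L1.integrable_coeFn f).norm ?_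
        filter_upwards [hg] with ω h
        calc ‖(f : Ω → ℝ) ω * g ω‖ = ‖(f : Ω → ℝ) ω‖ * ‖g ω‖ := norm_mul _ _
          _ ≤ ‖(f : Ω → ℝ) ω‖ * 1 := by
              gcongr
              simpa [Real.norm_eq_abs] using h
          _ = ‖(f : Ω → ℝ) ω‖ := mul_one _
      exact h2.trans (le_of_eq (L1.norm_eq_integral_norm f).symm))

theorem pairCLM_apply (hms : ∀ s : Set Ω, MeasurableSet s) (μ : Measure Ω) [IsFiniteMeasure μ]
    (g : Ω → ℝ) (hg : ∀ᵐ ω ∂μ, |g ω| ≤ 1) (f : Lp ℝ 1 μ) :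
    pairCLM hms μ g hg f = ∫ ω, (f : Ω → ℝ) ω * g ω ∂μ := rfl



def Kpos (μ : Measure Ω) [IsFiniteMeasure μ] : Set (WeakDual ℝ (Lp ℝ 1 μ)) :=
  {φ | ∀ f : Lp ℝ 1 μ, (∀ᵐ ω ∂μ, 0 ≤ (f : Ω → ℝ) ω) →
    φ f ∈ Set.Icc 0 (∫ ω, (f : Ω → ℝ) ω ∂μ)}

theorem isClosed_Kpos (μ : Measure Ω) [IsFiniteMeasure μ] : IsClosed (Kpos μ) := by
  have : Kpos μ = ⋂ (f : Lp ℝ 1 μ) (_ : ∀ᵐ ω ∂μ, 0 ≤ (f : Ω → ℝ) ω),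
      (fun φ : WeakDual ℝ (Lp ℝ 1 μ) => φ f) ⁻¹' Set.Icc 0 (∫ ω, (f : Ω → ℝ) ω ∂μ) := by
    ext φ; simp [Kpos]
  rw [this]
  exact isClosed_iInter fun f => isClosed_iInter fun _ =>
    (isClosed_Icc.preimage (WeakDual.eval_continuous f))

theorem convex_Kpos (μ : Measure Ω) [IsFiniteMeasure μ] : Convex ℝ (Kpos μ) := by
  intro φ hφ ψ hψ a b ha hb hab f hf
  have h1 := hφ f hf
  have h2 := hψ f hf
  have heval : (a • φ + b • ψ) f = a * φ f + b * ψ f := rfl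
  rw [Set.mem_Icc, heval]
  constructor
  · exact add_nonneg (mul_nonneg ha h1.1) (mul_nonneg hb h2.1)
  · calc a * φ f + b * ψ f ≤ a * (∫ ω, (f : Ω → ℝ) ω ∂μ) + b * (∫ ω, (f : Ω → ℝ) ω ∂μ) :=
        add_le_add (mul_le_mul_of_nonneg_left h1.2 ha) (mul_le_mul_of_nonneg_left h2.2 hb)
      _ = _ := by rw [← add_mul, hab, one_mul]

theorem norm_le_of_mem_Kpos {μ : Measure Ω} [IsFiniteMeasure μ]
    {φ : WeakDual ℝ (Lp ℝ 1 μ)} (hφ : φ ∈ Kpos μ) (f : Lp ℝ 1 μ) : ‖φ f‖ ≤ ‖f‖ := by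
  have hfd : f = Lp.posPart f - Lp.negPart f := by
    refine (Lp.ext ?_).symm
    filter_upwards [Lp.coeFn_sub (Lp.posPart f) (Lp.negPart f), Lp.coeFn_posPart f,
      Lp.coeFn_negPart f] with ω h1 h2 h3
    rw [h1, Pi.sub_apply, h2, h3]
    simp [max_def, min_def]
    split_ifs <;> linarith
  have hpos := hφ (Lp.posPart f) (by filter_upwards [Lp.coeFn_posPart f] with ω h; simp [h])
  have hneg := hφ (Lp.negPart f) (by
    filter_upwards [Lp.coeFn_negPart_eq_max f] with ω h
    simp [h])
  have heval : φ f = φ (Lp.posPart f) - φ (Lp.negPart f) := by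
    conv_lhs => rw [hfd]
    exact map_sub φ _ _
  have hsum : (∫ ω, (Lp.posPart f : Ω → ℝ) ω ∂μ) + (∫ ω, (Lp.negPart f : Ω → ℝ) ω ∂μ)
      = ‖f‖ := by
    rw [← integral_add (L1.integrable_coeFn _) (L1.integrable_coeFn _),
      L1.norm_eq_integral_norm f]
    refine integral_congr_ae ?_
    filter_upwards [Lp.coeFn_posPart f, Lp.coeFn_negPart_eq_max f] with ω h1 h2
    rw [h1, h2, Real.norm_eq_abs, abs_eq_max_neg]
    simp only [max_def]
    split_ifs <;> linarith
  rw [heval, Real.norm_eq_abs, abs_sub_le_iff]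
  constructor <;> nlinarith [hpos.1, hpos.2, hneg.1, hneg.2]

theorem isCompact_Kpos (μ : Measure Ω) [IsFiniteMeasure μ] : IsCompact (Kpos μ) := by
  refine WeakDual.isCompact_of_bounded_of_closed ?_ (isClosed_Kpos μ)
  refine Bornology.IsBounded.subset (Metric.isBounded_closedBall (x := (0 : StrongDual ℝ (Lp ℝ 1 μ))) (r := 1)) ?_
  intro ψ hψ
  show WeakDual.toStrongDual ψ ∈ Metric.closedBall (0 : StrongDual ℝ (Lp ℝ 1 μ)) 1
  rw [Metric.mem_closedBall, dist_zero_right]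
  exact ContinuousLinearMap.opNorm_le_bound _ zero_le_one
    (fun f => by rw [one_mul]; exact norm_le_of_mem_Kpos hψ f)



def indL1 (hms : ∀ s : Set Ω, MeasurableSet s) (μ : Measure Ω) [IsFiniteMeasure μ]
    (s : Set Ω) : Lp ℝ 1 μ :=
  indicatorConstLp 1 (hms s) (measure_ne_top μ s) (1 : ℝ)

variable (hms : ∀ s : Set Ω, MeasurableSet s) (μ : Measure Ω) [IsFiniteMeasure μ]

theorem indL1_coeFn (s : Set Ω) :
    (indL1 hms μ s : Ω → ℝ) =ᵐ[μ] s.indicator fun _ => (1 : ℝ) :=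
  indicatorConstLp_coeFn

theorem indL1_nonneg (s : Set Ω) : ∀ᵐ ω ∂μ, 0 ≤ (indL1 hms μ s : Ω → ℝ) ω := by
  filter_upwards [indL1_coeFn hms μ s] with ω h
  rw [h]
  exact Set.indicator_nonneg (fun _ _ => zero_le_one) ω

theorem indL1_integral (s : Set Ω) :
    ∫ ω, (indL1 hms μ s : Ω → ℝ) ω ∂μ = (μ s).toReal := by
  rw [indL1, integral_indicatorConstLp (hms s) (measure_ne_top μ s) (1 : ℝ), smul_eq_mul,
    mul_one, measureReal_def]

theorem indL1_union {s t : Set Ω} (hst : Disjoint s t) :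
    indL1 hms μ (s ∪ t) = indL1 hms μ s + indL1 hms μ t := by
  refine Lp.ext ?_
  filter_upwards [Lp.coeFn_add (indL1 hms μ s) (indL1 hms μ t), indL1_coeFn hms μ s,
    indL1_coeFn hms μ t, indL1_coeFn hms μ (s ∪ t)] with ω h1 h2 h3 h4
  rw [h4, h1, Pi.add_apply, h2, h3, Set.indicator_union_of_disjoint hst]

theorem indL1_biUnion (s : ℕ → Set Ω) (hd : Pairwise (Function.onFun Disjoint s))
    (F : Finset ℕ) : indL1 hms μ (⋃ i ∈ F, s i) = ∑ i ∈ F, indL1 hms μ (s i) := by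
  classical
  induction F using Finset.induction with
  | empty => simp [indL1, indicatorConstLp_empty]
  | insert a F hnotmem ih =>
    rw [Finset.sum_insert hnotmem, ← ih, Finset.set_biUnion_insert,
      indL1_union hms μ]
    exact Set.disjoint_iUnion₂_right.mpr fun i hi => hd (fun h => hnotmem (h ▸ hi))

theorem indL1_hasSum (s : ℕ → Set Ω) (hd : Pairwise (Function.onFun Disjoint s)) :
    HasSum (fun i => indL1 hms μ (s i)) (indL1 hms μ (⋃ i, s i)) := by
  have hr : HasSum (fun i => (μ (s i)).toReal) ((μ (⋃ i, s i)).toReal) := by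
    have hne : ∑' i, μ (s i) ≠ ⊤ := by
      rw [← measure_iUnion hd fun i => hms (s i)]; exact measure_ne_top μ _
    rw [measure_iUnion hd fun i => hms (s i), ENNReal.tsum_toReal_eq
      (fun _ => measure_ne_top μ _)]
    exact ENNReal.hasSum_toReal hne
  rw [HasSum]
  rw [tendsto_iff_dist_tendsto_zero]
  have key : ∀ F : Finset ℕ,
      dist (∑ i ∈ F, indL1 hms μ (s i)) (indL1 hms μ (⋃ i, s i))
        = (μ (⋃ i, s i)).toReal - ∑ i ∈ F, (μ (s i)).toReal := by
    intro F
    have hsub : (⋃ i ∈ F, s i) ⊆ ⋃ i, s i := Set.iUnion₂_subset fun i _ => subset_iUnion s i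
    have hdisj : Disjoint (⋃ i ∈ F, s i) ((⋃ i, s i) \ ⋃ i ∈ F, s i) :=
      disjoint_sdiff_right
    have hdeq : (⋃ i ∈ F, s i) ∪ ((⋃ i, s i) \ ⋃ i ∈ F, s i) = ⋃ i, s i :=
      Set.union_diff_cancel hsub
    have h1 : indL1 hms μ (⋃ i, s i)
        = ∑ i ∈ F, indL1 hms μ (s i) + indL1 hms μ ((⋃ i, s i) \ ⋃ i ∈ F, s i) := by
      rw [← indL1_biUnion hms μ s hd F, ← indL1_union hms μ hdisj, hdeq]
    rw [dist_eq_norm, h1]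
    have : ∑ i ∈ F, indL1 hms μ (s i)
        - (∑ i ∈ F, indL1 hms μ (s i) + indL1 hms μ ((⋃ i, s i) \ ⋃ i ∈ F, s i))
        = -indL1 hms μ ((⋃ i, s i) \ ⋃ i ∈ F, s i) := by abel
    rw [this, norm_neg, indL1, norm_indicatorConstLp one_ne_zero ENNReal.one_ne_top, measureReal_def]
    have hμd : μ ((⋃ i, s i) \ ⋃ i ∈ F, s i) = μ (⋃ i, s i) - μ (⋃ i ∈ F, s i) :=
      measure_diff hsub (hms _).nullMeasurableSet (measure_ne_top μ _)
    have hμF : μ (⋃ i ∈ F, s i) = ∑ i ∈ F, μ (s i) :=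
      measure_biUnion_finset (fun i _ j _ hij => hd hij) (fun i _ => hms (s i))
    rw [hμd, ENNReal.toReal_sub_of_le (measure_mono hsub) (measure_ne_top μ _), hμF,
      ENNReal.toReal_sum (fun i _ => measure_ne_top μ _)]
    simp
  simp_rw [key]
  have := hr.tendsto_sum_nat
  have h2 : Tendsto (fun F : Finset ℕ => ∑ i ∈ F, (μ (s i)).toReal) atTop
      (𝓝 ((μ (⋃ i, s i)).toReal)) := hr
  have h3 := (tendsto_const_nhds (x := (μ (⋃ i, s i)).toReal) (f := atTop (α := Finset ℕ))).sub h2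
  simpa using h3

section Repr

variable (hms : ∀ s : Set Ω, MeasurableSet s) {μ : Measure Ω} [IsFiniteMeasure μ]

/-- The countably additive measure induced by a positive functional on `L¹(μ)`. -/
def KMeas (φ : WeakDual ℝ (Lp ℝ 1 μ)) (hφ : φ ∈ Kpos μ) : Measure Ω :=
  Measure.ofMeasurable (fun s _ => ENNReal.ofReal (φ (indL1 hms μ s)))
    (by
      have h0 : indL1 hms μ (∅ : Set Ω) = 0 := by
        rw [indL1]; exact indicatorConstLp_empty
      show ENNReal.ofReal (φ (indL1 hms μ ∅)) = 0
      rw [h0, map_zero, ENNReal.ofReal_zero])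
    (by
      intro s hsm hd
      have hs : HasSum (fun i => φ (indL1 hms μ (s i))) (φ (indL1 hms μ (⋃ i, s i))) :=
        ContinuousLinearMap.hasSum (show Lp ℝ 1 μ →L[ℝ] ℝ from φ) (indL1_hasSum hms μ s hd)
      show ENNReal.ofReal (φ (indL1 hms μ (⋃ i, s i)))
          = ∑' i, ENNReal.ofReal (φ (indL1 hms μ (s i)))
      rw [← hs.tsum_eq, ENNReal.ofReal_tsum_of_nonneg
        (fun i => (hφ _ (indL1_nonneg hms μ (s i))).1) hs.summable])

theorem KMeas_apply (φ : WeakDual ℝ (Lp ℝ 1 μ)) (hφ : φ ∈ Kpos μ) (s : Set Ω) :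
    KMeas hms φ hφ s = ENNReal.ofReal (φ (indL1 hms μ s)) :=
  Measure.ofMeasurable_apply s (hms s)

theorem KMeas_le (φ : WeakDual ℝ (Lp ℝ 1 μ)) (hφ : φ ∈ Kpos μ) : KMeas hms φ hφ ≤ μ := by
  intro s
  rw [KMeas_apply]
  refine ENNReal.ofReal_le_of_le_toReal ?_
  have := (hφ _ (indL1_nonneg hms μ s)).2
  rwa [indL1_integral hms μ s] at this

theorem φ_indL1_eq (φ : WeakDual ℝ (Lp ℝ 1 μ)) (hφ : φ ∈ Kpos μ) (s : Set Ω) :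
    φ (indL1 hms μ s) = (KMeas hms φ hφ s).toReal := by
  rw [KMeas_apply, ENNReal.toReal_ofReal (hφ _ (indL1_nonneg hms μ s)).1]

theorem Kpos_repr (φ : WeakDual ℝ (Lp ℝ 1 μ)) (hφ : φ ∈ Kpos μ) :
    ∃ H : Ω → ℝ, (∀ ω, 0 ≤ H ω) ∧ (∀ᵐ ω ∂μ, H ω ≤ 1) ∧
      (∀ s : Set Ω, ∫ ω in s, H ω ∂μ = (KMeas hms φ hφ s).toReal) ∧
      ∀ f : Lp ℝ 1 μ, φ f = ∫ ω, (f : Ω → ℝ) ω * H ω ∂μ := by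
  set ν := KMeas hms φ hφ with hν
  haveI : IsFiniteMeasure ν := isFiniteMeasure_of_le μ (KMeas_le hms φ hφ)
  have hac : ν ≪ μ := Measure.absolutelyContinuous_of_le (KMeas_le hms φ hφ)
  set H : Ω → ℝ := fun ω => (ν.rnDeriv μ ω).toReal with hH
  have hH0 : ∀ ω, 0 ≤ H ω := fun ω => ENNReal.toReal_nonneg
  have hH1 : ∀ᵐ ω ∂μ, H ω ≤ 1 := by
    filter_upwards [Measure.rnDeriv_le_one_of_le (KMeas_le hms φ hφ)] with ω h
    have h' : ν.rnDeriv μ ω ≤ 1 := by simpa using h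
    have := ENNReal.toReal_mono ENNReal.one_ne_top h'
    simpa using this
  have hH1' : ∀ᵐ ω ∂μ, |H ω| ≤ 1 := by
    filter_upwards [hH1] with ω h
    rw [abs_of_nonneg (hH0 ω)]; exact h
  have hset : ∀ s : Set Ω, ∫ ω in s, H ω ∂μ = (ν s).toReal := fun s =>
    Measure.setIntegral_toReal_rnDeriv hac s
  refine ⟨H, hH0, hH1, hset, ?_⟩
  haveI : Fact ((1 : ℝ≥0∞) ≤ 1) := ⟨le_rfl⟩
  refine Lp.induction (E := ℝ) (μ := μ) (p := 1) ENNReal.one_ne_top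
    (fun f => φ f = pairCLM hms μ H hH1' f) ?_ ?_ ?_
  · intro c s hs hμs
    rw [Lp.simpleFunc.coe_indicatorConst]
    have heq : (indicatorConstLp 1 hs hμs.ne c : Lp ℝ 1 μ) = c • indL1 hms μ s := by
      refine Lp.ext ?_
      filter_upwards [indicatorConstLp_coeFn (p := 1) (hs := hs) (hμs := hμs.ne) (c := c),
        Lp.coeFn_smul c (indL1 hms μ s), indL1_coeFn hms μ s] with ω h1 h2 h3
      rw [h1, h2, Pi.smul_apply, h3]
      by_cases hωs : ω ∈ s <;> simp [Set.indicator, hωs]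
    rw [heq, _root_.map_smul, _root_.map_smul, smul_eq_mul, smul_eq_mul, φ_indL1_eq hms φ hφ s,
      pairCLM_apply]
    have : ∫ ω, (indL1 hms μ s : Ω → ℝ) ω * H ω ∂μ = (ν s).toReal := by
      rw [← hset s]
      have h2 : (fun ω => (indL1 hms μ s : Ω → ℝ) ω * H ω)
          =ᵐ[μ] s.indicator (fun ω => H ω) := by
        filter_upwards [indL1_coeFn hms μ s] with ω h
        rw [h]
        by_cases hωs : ω ∈ s <;> simp [Set.indicator, hωs]
      rw [integral_congr_ae h2, integral_indicator (hms s)]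
    rw [this]
  · intro f g hf hg hdisj hPf hPg
    rw [map_add, map_add, hPf, hPg]
  · exact isClosed_eq (map_continuous φ) (pairCLM hms μ H hH1').continuous
end Repr

section Pieces

theorem exists_pieces {Ω : Type*} [MeasurableSpace Ω] (hms : ∀ s : Set Ω, MeasurableSet s)
    (μ : Measure Ω) [IsFiniteMeasure μ]
    (hsplit : ∀ s : Set Ω, 0 < μ s → ∃ B ⊆ s, 0 < μ B ∧ μ B < μ s) :
    ∀ (m : ℕ) (s : Set Ω), 0 < μ s → ∃ t : Fin m → Set Ω,
      (∀ j, t j ⊆ s) ∧ Pairwise (Function.onFun Disjoint t) ∧ ∀ j, 0 < μ (t j) := by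
  intro m
  induction m with
  | zero => exact fun s _ => ⟨Fin.elim0, fun j => j.elim0, fun i => i.elim0, fun j => j.elim0⟩
  | succ m ih =>
    intro s hμs
    obtain ⟨B, hBs, hB0, hBlt⟩ := hsplit s hμs
    have hdiff : 0 < μ (s \ B) := by
      by_contra h
      push_neg at h
      have h0 : μ (s \ B) = 0 := le_antisymm h (zero_le)
      have hle2 : μ s ≤ μ B := by
        calc μ s ≤ μ (B ∪ s \ B) := measure_mono (by
              intro x hx
              by_cases hxB : x ∈ B
              exacts [Or.inl hxB, Or.inr ⟨hx, hxB⟩])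
          _ ≤ μ B + μ (s \ B) := measure_union_le _ _
          _ = μ B := by rw [h0, add_zero]
      exact absurd hBlt (not_lt.mpr hle2)
    obtain ⟨t, hts, htd, ht0⟩ := ih (s \ B) hdiff
    refine ⟨Fin.cons B t, ?_, ?_, ?_⟩
    · intro j
      refine Fin.cases ?_ ?_ j
      · exact hBs
      · exact fun i => (hts i).trans diff_subset
    · have hBt : ∀ j : Fin m, Disjoint B (t j) :=
        fun j => (Set.disjoint_sdiff_right (s := B) (t := s)).mono_right (hts j)
      intro i j hij
      revert hij
      refine Fin.cases ?_ ?_ i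
      · refine Fin.cases ?_ ?_ j
        · intro h; exact absurd rfl h
        · intro j' _
          rw [Function.onFun, Fin.cons_zero, Fin.cons_succ]
          exact hBt j'
      · intro i'
        refine Fin.cases ?_ ?_ j
        · intro _
          rw [Function.onFun, Fin.cons_zero, Fin.cons_succ]
          exact (hBt i').symm
        · intro j' h
          rw [Function.onFun, Fin.cons_succ, Fin.cons_succ]
          exact htd fun hh => h (by rw [hh])
    · intro j
      refine Fin.cases ?_ ?_ j
      · simpa using hB0
      · intro i; simpa using ht0 i

end Pieces

section PairMem

variable {Ω : Type*} [MeasurableSpace Ω]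

theorem pair_mem_Kpos (hms : ∀ s : Set Ω, MeasurableSet s) (μ : Measure Ω) [IsFiniteMeasure μ]
    (g : Ω → ℝ) (hg : ∀ᵐ ω ∂μ, |g ω| ≤ 1) (h0 : ∀ᵐ ω ∂μ, 0 ≤ g ω)
    (h1 : ∀ᵐ ω ∂μ, g ω ≤ 1) :
    StrongDual.toWeakDual (pairCLM hms μ g hg) ∈ Kpos μ := by
  intro f hf
  have happ : (StrongDual.toWeakDual (pairCLM hms μ g hg)) f
      = ∫ ω, (f : Ω → ℝ) ω * g ω ∂μ := rfl
  rw [Set.mem_Icc, happ]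
  constructor
  · exact integral_nonneg_of_ae (by
      filter_upwards [hf, h0] with ω a b; exact mul_nonneg a b)
  · refine integral_mono_ae (integrable_mul hms μ g 1 hg f) (L1.integrable_coeFn f) ?_
    filter_upwards [hf, h1] with ω a b
    exact mul_le_of_le_one_right a b

end PairMem

section Main

set_option maxHeartbeats 1000000 in
theorem exists_simultaneous_split {Ω : Type*} [MeasurableSpace Ω]
    (hms : ∀ s : Set Ω, MeasurableSet s) {n : ℕ} (p : Fin n → Measure Ω)
    (hfin : ∀ i, IsFiniteMeasure (p i))
    (hna : ∀ (i : Fin n) (A : Set Ω), 0 < p i A → ∃ B ⊆ A, 0 < p i B ∧ p i B < p i A)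
    (A : Set Ω) (α : ℝ) (hα0 : 0 ≤ α) (hα1 : α ≤ 1) :
    ∃ B ⊆ A, ∀ i, p i B = ENNReal.ofReal α * p i A := by
  classical
  haveI := hfin
  set μ : Measure Ω := ∑ i, p i with hμdef
  have hμapp : ∀ s : Set Ω, μ s = ∑ i, p i s := fun s => by
    rw [hμdef]; exact Measure.finset_sum_apply _ _ _
  haveI : IsFiniteMeasure μ := by
    constructor
    rw [hμapp]
    exact ENNReal.sum_lt_top.mpr fun i _ => measure_lt_top (p i) _
  have hle : ∀ i, p i ≤ μ := by
    intro i
    refine Measure.le_iff'.mpr fun s => ?_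
    rw [hμapp]
    exact Finset.single_le_sum (f := fun j => p j s) (fun j _ => zero_le)
      (Finset.mem_univ i)
  have hac : ∀ i, p i ≪ μ := fun i => Measure.absolutelyContinuous_of_le (hle i)
  have hsplitμ : ∀ s : Set Ω, 0 < μ s → ∃ B ⊆ s, 0 < μ B ∧ μ B < μ s := by
    intro s hs
    have hex : ∃ i, 0 < p i s := by
      by_contra h
      push_neg at h
      have h0 : μ s = 0 := by
        rw [hμapp]
        exact Finset.sum_eq_zero fun i _ => le_antisymm (h i) (zero_le)
      exact absurd h0 hs.ne'
    obtain ⟨i, hi⟩ := hex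
    obtain ⟨B, hBs, hB0, hBlt⟩ := hna i s hi
    refine ⟨B, hBs, lt_of_lt_of_le hB0 (hle i B), ?_⟩
    have hi2 : 0 < p i (s \ B) := by
      by_contra h
      push_neg at h
      have h0 : p i (s \ B) = 0 := le_antisymm h (zero_le)
      have hsub : p i s ≤ p i B := by
        calc p i s ≤ p i (B ∪ s \ B) := measure_mono (by
              intro x hx
              by_cases hxB : x ∈ B
              exacts [Or.inl hxB, Or.inr ⟨hx, hxB⟩])
          _ ≤ p i B + p i (s \ B) := measure_union_le _ _
          _ = p i B := by rw [h0, add_zero]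
      exact absurd hBlt (not_lt.mpr hsub)
    have hunion : μ s = μ B + μ (s \ B) := by
      conv_lhs => rw [← Set.union_diff_cancel hBs]
      exact measure_union disjoint_sdiff_right (hms _)
    rw [hunion]
    exact ENNReal.lt_add_right (measure_ne_top μ B) (lt_of_lt_of_le hi2 (hle i _)).ne'
  -- the constraint functions
  set w : Fin n → Ω → ℝ :=
    fun i => A.indicator (fun ω => ((p i).rnDeriv μ ω).toReal) with hwdef
  have hwint : ∀ i, Integrable (w i) μ :=
    fun i => (Measure.integrable_toReal_rnDeriv).indicator (hms A)
  set e : Fin n → Lp ℝ 1 μ := fun i => (hwint i).toL1 _ with hedef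
  have hecoe : ∀ i, (e i : Ω → ℝ) =ᵐ[μ] w i := fun i => (hwint i).coeFn_toL1
  have hwint_eq : ∀ i, ∫ ω, w i ω ∂μ = (p i A).toReal := by
    intro i
    rw [hwdef]
    rw [integral_indicator (hms A)]
    exact Measure.setIntegral_toReal_rnDeriv (hac i) A
  -- the compact convex constraint set
  set K2 : Set (WeakDual ℝ (Lp ℝ 1 μ)) :=
    Kpos μ ∩ ⋂ i, {φ | φ (e i) = α * (p i A).toReal} with hK2def
  have hint_e : ∀ (i) (φ : WeakDual ℝ (Lp ℝ 1 μ)), φ ∈ K2 → φ (e i) = α * (p i A).toReal :=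
    fun i φ hφ => Set.mem_iInter.mp hφ.2 i
  -- K2 is nonempty
  have hiCLM : ∀ f : Lp ℝ 1 μ, (L1.integralCLM : Lp ℝ 1 μ →L[ℝ] ℝ) f = ∫ ω, (f : Ω → ℝ) ω ∂μ :=
    fun f => (L1.integral_eq f).symm.trans (L1.integral_eq_integral f)
  set φ₀ : WeakDual ℝ (Lp ℝ 1 μ) :=
    StrongDual.toWeakDual (α • (L1.integralCLM : Lp ℝ 1 μ →L[ℝ] ℝ)) with hφ₀def
  have hφ₀app : ∀ f : Lp ℝ 1 μ, φ₀ f = α * ∫ ω, (f : Ω → ℝ) ω ∂μ := by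
    intro f
    have : φ₀ f = α * (L1.integralCLM : Lp ℝ 1 μ →L[ℝ] ℝ) f := rfl
    rw [this, hiCLM f]
  have hφ₀K : φ₀ ∈ K2 := by
    constructor
    · intro f hf
      rw [Set.mem_Icc, hφ₀app f]
      have hnn : 0 ≤ ∫ ω, (f : Ω → ℝ) ω ∂μ := integral_nonneg_of_ae hf
      exact ⟨mul_nonneg hα0 hnn, mul_le_of_le_one_left hnn hα1⟩
    · refine Set.mem_iInter.mpr fun i => ?_
      show φ₀ (e i) = α * (p i A).toReal
      rw [hφ₀app (e i), integral_congr_ae (hecoe i), hwint_eq i]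
  -- K2 is compact
  have hK2closed : IsClosed K2 :=
    (isClosed_Kpos μ).inter (isClosed_iInter fun i =>
      isClosed_eq (WeakDual.eval_continuous (e i)) continuous_const)
  have hK2cpt : IsCompact K2 :=
    IsCompact.of_isClosed_subset (isCompact_Kpos μ) hK2closed Set.inter_subset_left
  -- extreme point
  obtain ⟨φ, hφext⟩ := hK2cpt.extremePoints_nonempty ⟨φ₀, hφ₀K⟩
  have hφK : φ ∈ K2 := hφext.1
  have hφKpos : φ ∈ Kpos μ := hφK.1
  obtain ⟨H, hH0, hH1, hset, hrep⟩ := Kpos_repr hms φ hφKpos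
  have hH1' : ∀ᵐ ω ∂μ, |H ω| ≤ 1 := by
    filter_upwards [hH1] with ω h
    rw [abs_of_nonneg (hH0 ω)]; exact h
  by_cases hcrit : ∀ m : ℕ,
      μ {ω | 1 / (m + 2 : ℝ) ≤ H ω ∧ H ω ≤ 1 - 1 / (m + 2 : ℝ)} = 0
  · -- good case : H is a.e. an indicator
    have hnull : μ {ω | 0 < H ω ∧ H ω < 1} = 0 := by
      refine measure_mono_null ?_ (measure_iUnion_null fun m : ℕ => hcrit m)
      intro ω hω
      obtain ⟨h1, h2⟩ := hω
      obtain ⟨m, hm⟩ := exists_nat_gt (max (1 / H ω) (1 / (1 - H ω)))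
      have hm1 : 1 / H ω < (m : ℝ) + 2 := by
        have := le_max_left (1 / H ω) (1 / (1 - H ω))
        linarith
      have hm2 : 1 / (1 - H ω) < (m : ℝ) + 2 := by
        have := le_max_right (1 / H ω) (1 / (1 - H ω))
        linarith
      have hmpos : (0 : ℝ) < (m : ℝ) + 2 := by positivity
      refine Set.mem_iUnion.mpr ⟨m, ?_, ?_⟩
      · rw [div_le_iff₀ hmpos]  -- 1 ≤ H ω * (m+2)
        rw [div_lt_iff₀ h1] at hm1
        nlinarith
      · have h12 : 0 < 1 - H ω := by linarith
        rw [div_lt_iff₀ h12] at hm2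
        have : 1 / ((m : ℝ) + 2) < 1 - H ω := by
          rw [div_lt_iff₀ hmpos]
          nlinarith
        linarith
    have hae2 : ∀ᵐ ω ∂μ, ¬(0 < H ω ∧ H ω < 1) := by
      rw [ae_iff]
      convert hnull using 2
      simp
    refine ⟨A ∩ {ω | 1 ≤ H ω}, Set.inter_subset_left, ?_⟩
    intro i
    have hae : (fun ω => (A ∩ {ω | 1 ≤ H ω}).indicator
        (fun ω => ((p i).rnDeriv μ ω).toReal) ω) =ᵐ[μ] fun ω => H ω * w i ω := by
      filter_upwards [hH1, hae2] with ω hle1 hnot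
      by_cases hA : ω ∈ A
      · by_cases h1' : 1 ≤ H ω
        · have hHeq : H ω = 1 := le_antisymm hle1 h1'
          have hmem : ω ∈ A ∩ {ω | 1 ≤ H ω} := ⟨hA, h1'⟩
          rw [Set.indicator_of_mem hmem, hHeq, one_mul, hwdef]
          simp [Set.indicator_of_mem hA]
        · have hHeq : H ω = 0 := by
            by_contra hne
            exact hnot ⟨lt_of_le_of_ne (hH0 ω) (Ne.symm hne), lt_of_not_ge h1'⟩
          have hnmem : ω ∉ A ∩ {ω | 1 ≤ H ω} := fun hmem => h1' hmem.2
          rw [Set.indicator_of_notMem hnmem, hHeq, zero_mul]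
      · have hnmem : ω ∉ A ∩ {ω | 1 ≤ H ω} := fun hmem => hA hmem.1
        rw [Set.indicator_of_notMem hnmem, hwdef]
        simp [Set.indicator_of_notMem hA]
    have hkey : (p i (A ∩ {ω | 1 ≤ H ω})).toReal = α * (p i A).toReal := by
      have h1 : (p i (A ∩ {ω | 1 ≤ H ω})).toReal
          = ∫ ω in A ∩ {ω | 1 ≤ H ω}, ((p i).rnDeriv μ ω).toReal ∂μ :=
        (Measure.setIntegral_toReal_rnDeriv (hac i) _).symm
      rw [h1, ← integral_indicator (hms _), integral_congr_ae hae]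
      have h2 : ∫ ω, H ω * w i ω ∂μ = ∫ ω, (e i : Ω → ℝ) ω * H ω ∂μ :=
        integral_congr_ae (by
          filter_upwards [hecoe i] with ω h; rw [h, mul_comm])
      rw [h2, ← hrep (e i), hint_e i φ hφK]
    rw [← ENNReal.ofReal_toReal (measure_ne_top (p i) (A ∩ {ω | 1 ≤ H ω})), hkey,
      ENNReal.ofReal_mul hα0, ENNReal.ofReal_toReal (measure_ne_top (p i) A)]
  · -- contradiction case
    exfalso
    push_neg at hcrit
    obtain ⟨m, hm⟩ := hcrit
    set ε : ℝ := 1 / (m + 2 : ℝ) with hεdef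
    have hε0 : 0 < ε := by positivity
    set E0 : Set Ω := {ω | ε ≤ H ω ∧ H ω ≤ 1 - ε} with hE0def
    have hE0 : 0 < μ E0 := zero_lt_iff.mpr hm
    obtain ⟨t, hts, htd, ht0⟩ := exists_pieces hms μ hsplitμ (n + 1) E0 hE0
    -- a nonzero kernel element
    set Mx : Matrix (Fin n) (Fin (n + 1)) ℝ :=
      Matrix.of fun i j => ∫ ω in t j, w i ω ∂μ with hMxdef
    have hninj : ¬ Function.Injective Mx.mulVecLin := by
      intro hinj
      have hr := LinearMap.finrank_le_finrank_of_injective hinj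
      rw [Module.finrank_fin_fun, Module.finrank_fin_fun] at hr
      omega
    obtain ⟨c₁, c₂, hceq, hcne⟩ := Function.not_injective_iff.mp hninj
    set c : Fin (n + 1) → ℝ := c₁ - c₂ with hcdef
    have hc0 : c ≠ 0 := sub_ne_zero.mpr hcne
    have hTc : Mx.mulVecLin c = 0 := by rw [hcdef, map_sub, hceq, sub_self]
    obtain ⟨j₀, hj₀⟩ := Function.ne_iff.mp hc0
    have hj₀' : c j₀ ≠ 0 := hj₀
    set S : ℝ := ∑ j, |c j| with hSdef
    have hS0 : 0 < S := by
      have h1 : |c j₀| ≤ S := Finset.single_le_sum (f := fun j => |c j|)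
        (fun j _ => abs_nonneg _) (Finset.mem_univ j₀)
      have h2 : 0 < |c j₀| := abs_pos.mpr hj₀'
      linarith
    set δ : ℝ := ε / S with hδdef
    have hδ0 : 0 < δ := div_pos hε0 hS0
    set k : Ω → ℝ := fun ω => ∑ j, (t j).indicator (fun _ => δ * c j) ω with hkdef
    have hkval : ∀ (j) (ω), ω ∈ t j → k ω = δ * c j := by
      intro j ω hω
      have hkw : k ω = ∑ j', (t j').indicator (fun _ => δ * c j') ω := rfl
      rw [hkw]
      rw [Finset.sum_eq_single j
        (fun b _ hbj => Set.indicator_of_notMem (Set.disjoint_left.mp (htd hbj) · hω) _)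
        (fun hj => absurd (Finset.mem_univ j) hj)]
      exact Set.indicator_of_mem hω _
    have hk0 : ∀ ω, ω ∉ E0 → k ω = 0 := fun ω hω =>
      Finset.sum_eq_zero fun j _ =>
        Set.indicator_of_notMem (fun hmem => hω (hts j hmem)) _
    have hkabs : ∀ ω, |k ω| ≤ ε := by
      intro ω
      by_cases hmem : ∃ j, ω ∈ t j
      · obtain ⟨j, hj⟩ := hmem
        rw [hkval j ω hj, abs_mul, abs_of_nonneg hδ0.le]
        have h1 : |c j| ≤ S := Finset.single_le_sum (f := fun j => |c j|)
          (fun j _ => abs_nonneg _) (Finset.mem_univ j)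
        calc δ * |c j| ≤ δ * S := by gcongr
          _ = ε := div_mul_cancel₀ ε hS0.ne'
      · push_neg at hmem
        have hkw : k ω = ∑ j', (t j').indicator (fun _ => δ * c j') ω := rfl
        rw [hkw]
        rw [Finset.sum_eq_zero fun j _ => Set.indicator_of_notMem (hmem j) _, abs_zero]
        exact hε0.le
    have hε1 : ε ≤ 1 := by
      rw [hεdef, div_le_one (by positivity)]
      have := Nat.cast_nonneg (α := ℝ) m
      linarith
    have hkint : Integrable k μ := integrable_of_abs_le hms μ k ε
      (Eventually.of_forall hkabs)
    -- bounds for H ± k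
    have hpm : ∀ᵐ ω ∂μ, (0 ≤ H ω + k ω ∧ H ω + k ω ≤ 1) ∧
        (0 ≤ H ω - k ω ∧ H ω - k ω ≤ 1) := by
      filter_upwards [hH1] with ω h1
      by_cases hmem : ω ∈ E0
      · obtain ⟨hεH, hH1ε⟩ := hmem
        obtain ⟨hk1, hk2⟩ := abs_le.mp (hkabs ω)
        exact ⟨⟨by linarith, by linarith⟩, ⟨by linarith, by linarith⟩⟩
      · rw [hk0 ω hmem]
        exact ⟨⟨by simpa using hH0 ω, by simpa using h1⟩,
          ⟨by simpa using hH0 ω, by simpa using h1⟩⟩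
    have habsp : ∀ᵐ ω ∂μ, |H ω + k ω| ≤ 1 := by
      filter_upwards [hpm] with ω h
      exact abs_le.mpr ⟨by linarith [h.1.1], h.1.2⟩
    have habsm : ∀ᵐ ω ∂μ, |H ω - k ω| ≤ 1 := by
      filter_upwards [hpm] with ω h
      exact abs_le.mpr ⟨by linarith [h.2.1], h.2.2⟩
    set φp : WeakDual ℝ (Lp ℝ 1 μ) :=
      StrongDual.toWeakDual (pairCLM hms μ (fun ω => H ω + k ω) habsp) with hφpdef
    set φm : WeakDual ℝ (Lp ℝ 1 μ) :=
      StrongDual.toWeakDual (pairCLM hms μ (fun ω => H ω - k ω) habsm) with hφmdef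
    have hφpapp : ∀ f : Lp ℝ 1 μ, φp f = ∫ ω, (f : Ω → ℝ) ω * (H ω + k ω) ∂μ := fun f => rfl
    have hφmapp : ∀ f : Lp ℝ 1 μ, φm f = ∫ ω, (f : Ω → ℝ) ω * (H ω - k ω) ∂μ := fun f => rfl
    -- splitting the integrals
    have hsplitp : ∀ f : Lp ℝ 1 μ, (∫ ω, (f : Ω → ℝ) ω * (H ω + k ω) ∂μ)
        = (∫ ω, (f : Ω → ℝ) ω * H ω ∂μ) + ∫ ω, (f : Ω → ℝ) ω * k ω ∂μ := by
      intro f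
      rw [← integral_add (integrable_mul hms μ H 1 hH1' f)
        (integrable_mul hms μ k 1 (Eventually.of_forall fun ω =>
          (hkabs ω).trans hε1) f)]
      exact integral_congr_ae (Eventually.of_forall fun ω => by ring)
    have hsplitm : ∀ f : Lp ℝ 1 μ, (∫ ω, (f : Ω → ℝ) ω * (H ω - k ω) ∂μ)
        = (∫ ω, (f : Ω → ℝ) ω * H ω ∂μ) - ∫ ω, (f : Ω → ℝ) ω * k ω ∂μ := by
      intro f
      rw [← integral_sub (integrable_mul hms μ H 1 hH1' f)
        (integrable_mul hms μ k 1 (Eventually.of_forall fun ω =>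
          (hkabs ω).trans hε1) f)]
      exact integral_congr_ae (Eventually.of_forall fun ω => by ring)
    -- the k-pairing vanishes on the constraints
    have hwk : ∀ i, ∫ ω, w i ω * k ω ∂μ = 0 := by
      intro i
      have hexp : (fun ω => w i ω * k ω)
          = fun ω => ∑ j, w i ω * (t j).indicator (fun _ => δ * c j) ω := by
        funext ω
        have hkw : k ω = ∑ j', (t j').indicator (fun _ => δ * c j') ω := rfl
        rw [hkw, Finset.mul_sum]
      rw [hexp, integral_finset_sum _ (fun j _ => by
        have : (fun ω => w i ω * (t j).indicator (fun _ => δ * c j) ω)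
            = (t j).indicator (fun ω => w i ω * (δ * c j)) := by
          funext ω
          by_cases hω : ω ∈ t j
          · rw [Set.indicator_of_mem hω, Set.indicator_of_mem hω]
          · rw [Set.indicator_of_notMem hω, Set.indicator_of_notMem hω, mul_zero]
        rw [this]
        exact ((hwint i).mul_const _).indicator (hms (t j)))]
      have hterm : ∀ j, (∫ ω, w i ω * (t j).indicator (fun _ => δ * c j) ω ∂μ)
          = Mx i j * (δ * c j) := by
        intro j
        have hptw : (fun ω => w i ω * (t j).indicator (fun _ => δ * c j) ω)
            = (t j).indicator (fun ω => w i ω * (δ * c j)) := by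
          funext ω
          by_cases hω : ω ∈ t j
          · rw [Set.indicator_of_mem hω, Set.indicator_of_mem hω]
          · rw [Set.indicator_of_notMem hω, Set.indicator_of_notMem hω, mul_zero]
        rw [hptw, integral_indicator (hms (t j)), integral_mul_const]
        rfl
      rw [Finset.sum_congr rfl fun j _ => hterm j]
      have hmv : Mx.mulVec c = 0 := hTc
      have hmvi : ∑ j, Mx i j * c j = 0 := by
        have := congrFun hmv i
        rwa [Matrix.mulVec, dotProduct] at this
      calc ∑ j, Mx i j * (δ * c j) = δ * ∑ j, Mx i j * c j := by
            rw [Finset.mul_sum]; exact Finset.sum_congr rfl fun j _ => by ring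
        _ = 0 := by rw [hmvi, mul_zero]
    have hek : ∀ i, ∫ ω, (e i : Ω → ℝ) ω * k ω ∂μ = 0 := by
      intro i
      have hcong : (fun ω => (e i : Ω → ℝ) ω * k ω) =ᵐ[μ] fun ω => w i ω * k ω := by
        filter_upwards [hecoe i] with ω h
        rw [h]
      rw [integral_congr_ae hcong]
      exact hwk i
    -- memberships in K2
    have hφpK : φp ∈ K2 := by
      constructor
      · exact pair_mem_Kpos hms μ _ habsp
          (by filter_upwards [hpm] with ω h; exact h.1.1)
          (by filter_upwards [hpm] with ω h; exact h.1.2)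
      · refine Set.mem_iInter.mpr fun i => ?_
        show φp (e i) = α * (p i A).toReal
        rw [hφpapp, hsplitp, hek i, add_zero, ← hrep (e i), hint_e i φ hφK]
    have hφmK : φm ∈ K2 := by
      constructor
      · exact pair_mem_Kpos hms μ _ habsm
          (by filter_upwards [hpm] with ω h; exact h.2.1)
          (by filter_upwards [hpm] with ω h; exact h.2.2)
      · refine Set.mem_iInter.mpr fun i => ?_
        show φm (e i) = α * (p i A).toReal
        rw [hφmapp, hsplitm, hek i, sub_zero, ← hrep (e i), hint_e i φ hφK]
    -- φ is the midpoint
    have hmid : φ ∈ openSegment ℝ φp φm := by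
      refine ⟨1/2, 1/2, by norm_num, by norm_num, by norm_num, ?_⟩
      refine DFunLike.ext _ _ fun f => ?_
      have happ : ((1/2 : ℝ) • φp + (1/2 : ℝ) • φm) f = (1/2) * φp f + (1/2) * φm f := rfl
      rw [happ, hφpapp, hφmapp, hsplitp, hsplitm, hrep f]
      ring
    have heq := hφext.2 hφpK hφmK hmid
    have hpm_eq : φp = φm := heq.trans (hφext.2 hφmK hφpK (by rwa [openSegment_symm] at hmid)).symm
    -- contradiction by evaluating at the indicator of t j₀
    have hik : ∫ ω, (indL1 hms μ (t j₀) : Ω → ℝ) ω * k ω ∂μ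
        = δ * c j₀ * (μ (t j₀)).toReal := by
      have hptw : (fun ω => (indL1 hms μ (t j₀) : Ω → ℝ) ω * k ω)
          =ᵐ[μ] (t j₀).indicator (fun _ => δ * c j₀) := by
        filter_upwards [indL1_coeFn hms μ (t j₀)] with ω h
        rw [h]
        by_cases hω : ω ∈ t j₀
        · rw [Set.indicator_of_mem hω, Set.indicator_of_mem hω, one_mul, hkval j₀ ω hω]
        · rw [Set.indicator_of_notMem hω, Set.indicator_of_notMem hω, zero_mul]
      rw [integral_congr_ae hptw, integral_indicator_const _ (hms (t j₀)), smul_eq_mul,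
        mul_comm, measureReal_def]
    have hval : φp (indL1 hms μ (t j₀)) = φm (indL1 hms μ (t j₀)) := by rw [hpm_eq]
    rw [hφpapp, hφmapp, hsplitp, hsplitm, hik] at hval
    have hμt : 0 < (μ (t j₀)).toReal :=
      ENNReal.toReal_pos (ht0 j₀).ne' (measure_ne_top μ _)
    have : δ * c j₀ * (μ (t j₀)).toReal = 0 := by linarith
    rcases mul_eq_zero.mp this with h | h
    · rcases mul_eq_zero.mp h with h' | h'
      · exact hδ0.ne' h'
      · exact hj₀' h'
    · exact hμt.ne' h

end Main

end Lyap


open MeasureTheory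

set_option maxHeartbeats 1000000 in
/-- Existence of pseudo-mixed acts (paper's Proposition 1): given countably
additive, nonatomic probability measures `p 1, …, p n` on `(Ω, 2^Ω)`, an act
`f : Ω → X` with finite range, an outcome `x` and `α ∈ (0,1)`, there is an act
`g` with finite range such that every `i` assigns `g⁻¹(x)` probability
`α * p i (f⁻¹(x)) + (1 - α)` and `g⁻¹(y)` probability `α * p i (f⁻¹(y))` for
`y ≠ x`. -/
theorem stmt_2 {Ω X : Type*} {n : ℕ} (hn : 1 ≤ n)
    (p : Fin n → @Measure Ω ⊤)
    (hprob : ∀ i, @IsProbabilityMeasure Ω ⊤ (p i))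
    (hna : ∀ (i : Fin n) (A : Set Ω), 0 < p i A →
      ∃ B ⊆ A, 0 < p i B ∧ p i B < p i A)
    (f : Ω → X) (hf : (Set.range f).Finite) (x : X)
    (α : ℝ) (hα : α ∈ Set.Ioo (0 : ℝ) 1) :
    ∃ g : Ω → X, (Set.range g).Finite ∧
      (∀ i, p i (g ⁻¹' {x}) =
        ENNReal.ofReal α * p i (f ⁻¹' {x}) + ENNReal.ofReal (1 - α)) ∧
      (∀ i, ∀ y : X, y ≠ x →
        p i (g ⁻¹' {y}) = ENNReal.ofReal α * p i (f ⁻¹' {y})) := by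
  classical
  letI : MeasurableSpace Ω := ⊤
  have hms : ∀ s : Set Ω, MeasurableSet s := fun s => MeasurableSpace.measurableSet_top
  haveI hfin : ∀ i, IsFiniteMeasure (p i) := fun i => by haveI := hprob i; infer_instance
  have hchoice : ∀ y : X, ∃ B ⊆ f ⁻¹' {y},
      ∀ i, p i B = ENNReal.ofReal α * p i (f ⁻¹' {y}) := fun y =>
    Lyap.exists_simultaneous_split hms p hfin hna (f ⁻¹' {y}) α hα.1.le hα.2.le
  choose B hB hBp using hchoice
  set R : Finset X := hf.toFinset with hRdef
  have hmemR : ∀ ω, f ω ∈ R := fun ω => hf.mem_toFinset.mpr ⟨ω, rfl⟩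
  set g : Ω → X := fun ω => if ω ∈ B (f ω) then f ω else x with hgdef
  have hBf : ∀ y (ω), ω ∈ B y → f ω = y := fun y ω h => hB y h
  -- D is the union of the chosen pieces
  set D : Set Ω := {ω | ω ∈ B (f ω)} with hDdef
  have hDeq : D = ⋃ y ∈ R, B y := by
    ext ω
    simp only [hDdef, Set.mem_setOf_eq, Set.mem_iUnion]
    constructor
    · intro h
      exact ⟨f ω, hmemR ω, h⟩
    · rintro ⟨y, _, hy⟩
      rwa [hBf y ω hy]
  have hBdisj : (R : Set X).PairwiseDisjoint B := by
    intro y _ z _ hyz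
    exact (Set.disjoint_singleton.mpr hyz).preimage f |>.mono (hB y) (hB z)
  have hfibdisj : (R : Set X).PairwiseDisjoint (fun y => f ⁻¹' {y}) := by
    intro y _ z _ hyz
    exact (Set.disjoint_singleton.mpr hyz).preimage f
  have hfibuniv : (⋃ y ∈ R, f ⁻¹' {y}) = Set.univ := by
    ext ω
    simp only [Set.mem_iUnion, Set.mem_univ, iff_true]
    exact ⟨f ω, hmemR ω, rfl⟩
  have hμD : ∀ i, p i D = ENNReal.ofReal α := by
    intro i
    haveI := hprob i
    rw [hDeq, measure_biUnion_finset hBdisj (fun y _ => hms (B y))]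
    calc ∑ y ∈ R, p i (B y) = ∑ y ∈ R, ENNReal.ofReal α * p i (f ⁻¹' {y}) :=
          Finset.sum_congr rfl fun y _ => hBp y i
      _ = ENNReal.ofReal α * ∑ y ∈ R, p i (f ⁻¹' {y}) := by rw [Finset.mul_sum]
      _ = ENNReal.ofReal α * p i (⋃ y ∈ R, f ⁻¹' {y}) := by
          rw [measure_biUnion_finset hfibdisj (fun y _ => hms _)]
      _ = ENNReal.ofReal α := by rw [hfibuniv, measure_univ, mul_one]
  have hBxD : B x ⊆ D := by
    intro ω hω
    have : f ω = x := hBf x ω hω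
    simp only [hDdef, Set.mem_setOf_eq, this]
    exact hω
  have hgx : g ⁻¹' {x} = B x ∪ Dᶜ := by
    ext ω
    simp only [Set.mem_preimage, Set.mem_singleton_iff, hgdef, Set.mem_union,
      Set.mem_compl_iff, hDdef, Set.mem_setOf_eq]
    by_cases hb : ω ∈ B (f ω)
    · simp only [if_pos hb]
      constructor
      · intro h
        left
        rwa [h] at hb
      · rintro (h | h)
        · exact hBf x ω h
        · exact absurd hb h
    · simp only [if_neg hb]
      constructor
      · intro _; right; exact hb
      · intro _; trivial
  refine ⟨g, ?_, ?_, ?_⟩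
  · refine (hf.insert x).subset ?_
    rintro _ ⟨ω, rfl⟩
    by_cases h : ω ∈ B (f ω)
    · simp only [hgdef, if_pos h]
      exact Set.mem_insert_iff.mpr (Or.inr ⟨ω, rfl⟩)
    · simp only [hgdef, if_neg h]
      exact Set.mem_insert _ _
  · intro i
    haveI := hprob i
    have hdisj : Disjoint (B x) Dᶜ := disjoint_compl_right.mono_left hBxD
    rw [hgx, measure_union hdisj (hms _), hBp x i, measure_compl (hms D) (measure_ne_top _ _),
      measure_univ, hμD i]
    congr 1
    rw [ENNReal.ofReal_sub _ hα.1.le, ENNReal.ofReal_one]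
  · intro i y hy
    have hpre : g ⁻¹' {y} = B y := by
      ext ω
      simp only [Set.mem_preimage, Set.mem_singleton_iff, hgdef]
      by_cases hb : ω ∈ B (f ω)
      · simp only [if_pos hb]
        constructor
        · intro h
          rwa [h] at hb
        · intro h
          exact hBf y ω h
      · simp only [if_neg hb]
        constructor
        · intro h
          exact absurd h.symm hy
        · intro h
          exact absurd (by rwa [hBf y ω h]) hb
    rw [hpre]
    exact hBp y i
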